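/- Fix δ > 0, β ≥ 1 and an integer k ≥ 3, and define Δ_k^n = (n^β − (n−k)^β − 2)^{−δ} − ((n+1)^β − (n−k)^β)^{−δ} for integers n ≥ k+1. Then n ↦ Δ_k^n is non-increasing on {k+1, k+2, ...}. -/

import Mathlib

open Real Set

/-- Bernoulli-type bound: `β u^{β-1} (v-u) ≤ v^β - u^β` for `0 < u ≤ v`, `1 ≤ β`. -/
lemma bern_aux (β u v : ℝ) (hβ : 1 ≤ β) (hu : 0 < u) (huv : u ≤ v) :
    β * u ^ (β - 1) * (v - u) ≤ v ^ β - u ^ β := by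
  have hs : (-1 : ℝ) ≤ v / u - 1 := by
    have : 0 < v / u := div_pos (hu.trans_le huv) hu
    linarith
  have hb := one_add_mul_self_le_rpow_one_add hs hβ
  rw [show 1 + (v / u - 1) = v / u by ring, Real.div_rpow (hu.le.trans huv) hu.le] at hb
  have hupow : (0:ℝ) < u ^ β := Real.rpow_pos_of_pos hu β
  have h1 : u ^ β * (1 + β * (v / u - 1)) ≤ v ^ β := by
    rw [mul_comm]
    exact (le_div_iff₀ hupow).mp (by linarith [hb])
  have h2 : u ^ (β - 1) = u ^ β / u := Real.rpow_sub_one hu.ne' β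
  have : u ^ β * (1 + β * (v / u - 1)) = u ^ β + β * (u ^ β / u) * (v - u) := by
    field_simp
  rw [this] at h1
  rw [h2]
  linarith

/-- `(x^β-y^β)/(x^{β-1}-y^{β-1})` is monotone: cross-multiplied form. -/
lemma key_ratio (β : ℝ) (hβ : 1 < β) (y x w : ℝ) (hy : 0 < y) (hyx : y < x) (hxw : x ≤ w) :
    (x ^ β - y ^ β) * (w ^ (β-1) - y ^ (β-1)) ≤ (w ^ β - y ^ β) * (x ^ (β-1) - y ^ (β-1)) := by
  set G : ℝ → ℝ := fun s => (s ^ β - y ^ β) / (s ^ (β-1) - y ^ (β-1)) with hG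
  have hden : ∀ s, x ≤ s → 0 < s ^ (β-1) - y ^ (β-1) := fun s hs =>
    sub_pos.mpr (Real.rpow_lt_rpow hy.le (hyx.trans_le hs) (by linarith))
  have hder : ∀ s, x ≤ s → HasDerivAt G
      ((β * s ^ (β-1) * (s ^ (β-1) - y ^ (β-1)) -
        (s ^ β - y ^ β) * ((β-1) * s ^ (β-1-1))) / (s ^ (β-1) - y ^ (β-1))^2) s := by
    intro s hs
    have hs0 : (0:ℝ) < s := hy.trans (hyx.trans_le hs)
    have h1 : HasDerivAt (fun s : ℝ => s ^ β - y ^ β) (β * s ^ (β-1)) s :=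
      (Real.hasDerivAt_rpow_const (Or.inl hs0.ne')).sub_const _
    have h2 : HasDerivAt (fun s : ℝ => s ^ (β-1) - y ^ (β-1)) ((β-1) * s ^ (β-1-1)) s :=
      (Real.hasDerivAt_rpow_const (Or.inl hs0.ne')).sub_const _
    exact h1.div h2 (hden s hs).ne'
  have hmono : MonotoneOn G (Ici x) := by
    apply monotoneOn_of_hasDerivWithinAt_nonneg (convex_Ici x)
    · exact fun s hs => ((hder s hs).continuousAt).continuousWithinAt
    · intro s hs
      rw [interior_Ici] at hs
      exact (hder s (le_of_lt hs)).hasDerivWithinAt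
    · intro s hs
      rw [interior_Ici] at hs
      have hsx : x ≤ s := le_of_lt hs
      have hs0 : (0:ℝ) < s := hy.trans (hyx.trans_le hsx)
      apply div_nonneg _ (sq_nonneg _)
      have e1 : s ^ (β-1) = s ^ (β-1-1) * s := by
        rw [← Real.rpow_add_one hs0.ne' (β-1-1)]; ring_nf
      have e2 : s ^ β = s ^ (β-1-1) * s * s := by
        rw [← Real.rpow_add_one hs0.ne' (β-1-1), ← Real.rpow_add_one hs0.ne']; ring_nf
      have hp : (0:ℝ) < s ^ (β-1-1) := Real.rpow_pos_of_pos hs0 _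
      have hb := bern_aux β y s hβ.le hy (hyx.trans_le hsx).le
      have hyb : y * y ^ (β-1) = y ^ β := by
        rw [Real.rpow_sub_one hy.ne']; field_simp
      have key : 0 ≤ s ^ β - β * s * y ^ (β-1) + (β-1) * y ^ β := by nlinarith [hb, hyb]
      have expand : β * s ^ (β-1) * (s ^ (β-1) - y ^ (β-1)) -
          (s ^ β - y ^ β) * ((β-1) * s ^ (β-1-1))
          = s ^ (β-1-1) * (s ^ β - β * s * y ^ (β-1) + (β-1) * y ^ β) := by
        rw [e1, e2]; ring
      rw [expand]
      exact mul_nonneg hp.le key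
  have := hmono (self_mem_Ici) (mem_Ici.mpr hxw) hxw
  rw [hG] at this
  exact (div_le_div_iff₀ (hden x le_rfl) (hden w hxw)).mp this

/-- The crux inequality `b'·a ≤ a'·b`. -/
lemma crux (β K : ℝ) (hβ : 1 ≤ β) (hK : 3 ≤ K) (t : ℝ) (ht : K + 1 ≤ t) :
    β * ((t+1) ^ (β-1) - (t-K) ^ (β-1)) * (t ^ β - (t-K) ^ β - 2)
      ≤ β * (t ^ (β-1) - (t-K) ^ (β-1)) * ((t+1) ^ β - (t-K) ^ β) := by
  have hy : (0:ℝ) < t - K := by linarith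
  have hyx : t - K < t := by linarith
  rcases eq_or_lt_of_le hβ with h1 | h1
  · rw [← h1]
    simp
  · have hkr := key_ratio β h1 (t-K) t (t+1) hy hyx (by linarith)
    have hwy : (t-K) ^ (β-1) ≤ (t+1) ^ (β-1) :=
      Real.rpow_le_rpow hy.le (by linarith) (by linarith)
    nlinarith [hkr, hwy]

/-- **Lemma (monotonicity of `Δ_k^n`).** For `δ > 0`, `β ≥ 1` and an integer `k ≥ 3`, the
quantity `Δ_k^n = (n^β − (n−k)^β − 2)^{−δ} − ((n+1)^β − (n−k)^β)^{−δ}` is a non-increasing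
function of the integer `n ≥ k + 1`. -/
theorem Delta_antitone (δ β : ℝ) (hδ : 0 < δ) (hβ : 1 ≤ β) (k : ℕ) (hk : 3 ≤ k)
    (Δ : ℕ → ℝ)
    (hΔ : ∀ n : ℕ, Δ n =
      ((n : ℝ) ^ β - ((n : ℝ) - (k : ℝ)) ^ β - 2) ^ (-δ)
        - (((n : ℝ) + 1) ^ β - ((n : ℝ) - (k : ℝ)) ^ β) ^ (-δ)) :
    ∀ m n : ℕ, k + 1 ≤ m → m ≤ n → Δ n ≤ Δ m := by
  intro m n hm hmn
  set K : ℝ := (k : ℝ) with hKdef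
  have hK : (3:ℝ) ≤ K := by rw [hKdef]; exact_mod_cast hk
  set a : ℝ → ℝ := fun t => t ^ β - (t - K) ^ β - 2 with ha
  set b : ℝ → ℝ := fun t => (t+1) ^ β - (t - K) ^ β with hb
  -- positivity of a on Ici (K+1)
  have hapos : ∀ t : ℝ, K + 1 ≤ t → 1 ≤ a t := by
    intro t ht
    have hy : (0:ℝ) < t - K := by linarith
    have h1 : 1 ≤ (t - K) ^ (β-1) := Real.one_le_rpow (by linarith) (by linarith)
    have hb2 := bern_aux β (t - K) t hβ hy (by linarith)
    have e : t - (t - K) = K := by ring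
    rw [e] at hb2
    have p1 : 1 ≤ β * (t - K) ^ (β-1) := by nlinarith
    have p2 : 3 ≤ β * (t - K) ^ (β-1) * K := by nlinarith
    simp only [ha]
    linarith
  -- b ≥ a + 2
  have hba : ∀ t : ℝ, K + 1 ≤ t → a t + 2 ≤ b t := by
    intro t ht
    have : t ^ β ≤ (t+1) ^ β := Real.rpow_le_rpow (by linarith) (by linarith) (by linarith)
    simp only [ha, hb]
    linarith
  -- a is monotone on Ici (K+1)
  have hamono : MonotoneOn a (Ici (K+1)) := by
    apply monotoneOn_of_hasDerivWithinAt_nonneg (convex_Ici _)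
      (f' := fun t => β * t ^ (β-1) - β * (t - K) ^ (β-1) * 1)
    · intro t ht
      have ht0 : (0:ℝ) < t := by have := mem_Ici.mp ht; linarith
      have h1 : HasDerivAt (fun t : ℝ => t ^ β) (β * t ^ (β-1)) t :=
        Real.hasDerivAt_rpow_const (Or.inl ht0.ne')
      have h2 : HasDerivAt (fun t : ℝ => (t - K) ^ β) (β * (t - K) ^ (β-1) * 1) t := by
        have := mem_Ici.mp ht
        exact (Real.hasDerivAt_rpow_const (x := t - K) (p := β)
          (Or.inl (ne_of_gt (by linarith : (0:ℝ) < t - K)))).comp t ((hasDerivAt_id t).sub_const K)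
      exact (((h1.sub h2).sub_const 2).continuousAt).continuousWithinAt
    · intro t ht
      rw [interior_Ici] at ht
      have ht' : K + 1 < t := ht
      have ht0 : (0:ℝ) < t := by linarith
      have h1 : HasDerivAt (fun t : ℝ => t ^ β) (β * t ^ (β-1)) t :=
        Real.hasDerivAt_rpow_const (Or.inl ht0.ne')
      have h2 : HasDerivAt (fun t : ℝ => (t - K) ^ β) (β * (t - K) ^ (β-1) * 1) t :=
        by exact (Real.hasDerivAt_rpow_const (x := t - K) (p := β)
          (Or.inl (ne_of_gt (by linarith : (0:ℝ) < t - K)))).comp t ((hasDerivAt_id t).sub_const K)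
      exact (((h1.sub h2).sub_const 2)).hasDerivWithinAt
    · intro t ht
      rw [interior_Ici] at ht
      have ht' : K + 1 < t := ht
      have : (t - K) ^ (β-1) ≤ t ^ (β-1) :=
        Real.rpow_le_rpow (by linarith) (by linarith) (by linarith)
      nlinarith [this]
  -- b/a is antitone on Ici (K+1)
  have hanti : AntitoneOn (fun t => b t / a t) (Ici (K+1)) := by
    apply antitoneOn_of_hasDerivWithinAt_nonpos (convex_Ici _)
      (f' := fun t => ((β * (t+1) ^ (β-1) * 1 - β * (t - K) ^ (β-1) * 1) * a t -
        b t * (β * t ^ (β-1) - β * (t - K) ^ (β-1) * 1)) / (a t)^2)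
    · intro t ht
      have ht' := mem_Ici.mp ht
      have ht0 : (0:ℝ) < t := by linarith
      have hbd : HasDerivAt b (β * (t+1) ^ (β-1) * 1 - β * (t - K) ^ (β-1) * 1) t := by
        have h1 : HasDerivAt (fun t : ℝ => (t+1) ^ β) (β * (t+1) ^ (β-1) * 1) t :=
          by exact (Real.hasDerivAt_rpow_const (x := t+1) (p := β)
            (Or.inl (ne_of_gt (by linarith : (0:ℝ) < t + 1)))).comp t ((hasDerivAt_id t).add_const 1)
        have h2 : HasDerivAt (fun t : ℝ => (t - K) ^ β) (β * (t - K) ^ (β-1) * 1) t :=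
          by exact (Real.hasDerivAt_rpow_const (x := t - K) (p := β)
            (Or.inl (ne_of_gt (by linarith : (0:ℝ) < t - K)))).comp t ((hasDerivAt_id t).sub_const K)
        exact h1.sub h2
      have had : HasDerivAt a (β * t ^ (β-1) - β * (t - K) ^ (β-1) * 1) t := by
        have h1 : HasDerivAt (fun t : ℝ => t ^ β) (β * t ^ (β-1)) t :=
          Real.hasDerivAt_rpow_const (Or.inl ht0.ne')
        have h2 : HasDerivAt (fun t : ℝ => (t - K) ^ β) (β * (t - K) ^ (β-1) * 1) t :=
          by exact (Real.hasDerivAt_rpow_const (x := t - K) (p := β)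
            (Or.inl (ne_of_gt (by linarith : (0:ℝ) < t - K)))).comp t ((hasDerivAt_id t).sub_const K)
        exact (h1.sub h2).sub_const 2
      have hane : a t ≠ 0 := by have := hapos t ht'; linarith
      exact ((hbd.div had hane).continuousAt).continuousWithinAt
    · intro t ht
      rw [interior_Ici] at ht
      have ht' : K + 1 ≤ t := le_of_lt ht
      have ht0 : (0:ℝ) < t := by linarith
      have hbd : HasDerivAt b (β * (t+1) ^ (β-1) * 1 - β * (t - K) ^ (β-1) * 1) t := by
        have h1 : HasDerivAt (fun t : ℝ => (t+1) ^ β) (β * (t+1) ^ (β-1) * 1) t :=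
          by exact (Real.hasDerivAt_rpow_const (x := t+1) (p := β)
            (Or.inl (ne_of_gt (by linarith : (0:ℝ) < t + 1)))).comp t ((hasDerivAt_id t).add_const 1)
        have h2 : HasDerivAt (fun t : ℝ => (t - K) ^ β) (β * (t - K) ^ (β-1) * 1) t :=
          by exact (Real.hasDerivAt_rpow_const (x := t - K) (p := β)
            (Or.inl (ne_of_gt (by linarith : (0:ℝ) < t - K)))).comp t ((hasDerivAt_id t).sub_const K)
        exact h1.sub h2
      have had : HasDerivAt a (β * t ^ (β-1) - β * (t - K) ^ (β-1) * 1) t := by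
        have h1 : HasDerivAt (fun t : ℝ => t ^ β) (β * t ^ (β-1)) t :=
          Real.hasDerivAt_rpow_const (Or.inl ht0.ne')
        have h2 : HasDerivAt (fun t : ℝ => (t - K) ^ β) (β * (t - K) ^ (β-1) * 1) t :=
          by exact (Real.hasDerivAt_rpow_const (x := t - K) (p := β)
            (Or.inl (ne_of_gt (by linarith : (0:ℝ) < t - K)))).comp t ((hasDerivAt_id t).sub_const K)
        exact (h1.sub h2).sub_const 2
      have hane : a t ≠ 0 := by have := hapos t ht'; linarith
      exact (hbd.div had hane).hasDerivWithinAt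
    · intro t ht
      rw [interior_Ici] at ht
      have ht' : K + 1 ≤ t := le_of_lt ht
      apply div_nonpos_of_nonpos_of_nonneg _ (sq_nonneg _)
      have hc := crux β K hβ hK t ht'
      simp only [ha, hb, mul_one]
      nlinarith [hc]
  -- cast facts
  have hmR : K + 1 ≤ (m : ℝ) := by
    have : ((k:ℕ) + 1 : ℝ) ≤ (m:ℝ) := by exact_mod_cast hm
    push_cast at this ⊢
    linarith
  have hnR : K + 1 ≤ (n : ℝ) := by
    have : (m:ℝ) ≤ (n:ℝ) := by exact_mod_cast hmn
    linarith
  have hmnR : (m:ℝ) ≤ (n:ℝ) := by exact_mod_cast hmn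
  -- abbreviations
  have hAm : (0:ℝ) < a m := lt_of_lt_of_le one_pos (hapos m hmR)
  have hAn : (0:ℝ) < a n := lt_of_lt_of_le one_pos (hapos n hnR)
  have hBm : (0:ℝ) < b m := by have := hba m hmR; linarith
  have hBn : (0:ℝ) < b n := by have := hba n hnR; linarith
  have hAmn : a m ≤ a n := hamono (mem_Ici.mpr hmR) (mem_Ici.mpr hnR) hmnR
  have hRat : b n / a n ≤ b m / a m := hanti (mem_Ici.mpr hmR) (mem_Ici.mpr hnR) hmnR
  have hcross : a m * b n ≤ a n * b m := by
    have := (div_le_div_iff₀ hAn hAm).mp hRat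
    nlinarith [this]
  -- factorization
  have fact : ∀ x y : ℝ, 0 < x → 0 < y → x ^ (-δ) - y ^ (-δ) = x ^ (-δ) * (1 - (x/y) ^ δ) := by
    intro x y hx hy
    rw [Real.div_rpow hx.le hy.le, Real.rpow_neg hx.le, Real.rpow_neg hy.le]
    have hxd : (0:ℝ) < x ^ δ := Real.rpow_pos_of_pos hx δ
    have hyd : (0:ℝ) < y ^ δ := Real.rpow_pos_of_pos hy δ
    field_simp
  have hΔm : Δ m = (a m) ^ (-δ) * (1 - (a m / b m) ^ δ) := by
    rw [hΔ m, ← fact _ _ hAm hBm]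
  have hΔn : Δ n = (a n) ^ (-δ) * (1 - (a n / b n) ^ δ) := by
    rw [hΔ n, ← fact _ _ hAn hBn]
  rw [hΔm, hΔn]
  have h1 : (a n) ^ (-δ) ≤ (a m) ^ (-δ) :=
    Real.rpow_le_rpow_of_nonpos hAm hAmn (by linarith)
  have hratm : a m / b m ≤ a n / b n := by
    rw [div_le_div_iff₀ hBm hBn]
    nlinarith [hcross]
  have h2 : (a m / b m) ^ δ ≤ (a n / b n) ^ δ :=
    Real.rpow_le_rpow (by positivity) hratm hδ.le
  have h3 : (a n / b n) ^ δ ≤ 1 := by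
    apply Real.rpow_le_one (by positivity) _ hδ.le
    rw [div_le_one hBn]
    have := hba n hnR; linarith
  have h4 : (0:ℝ) ≤ (a n) ^ (-δ) := (Real.rpow_pos_of_pos hAn _).le
  apply mul_le_mul h1 (by linarith) (by linarith) ((Real.rpow_pos_of_pos hAm _).le)
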